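/- For all (x,y) ∈ [−π,π]² and all A ∈ [0,1), the complex number 1 − A·p̂(x,y) satisfies |1 − A·p̂(x,y)| ≥ (1/24) · q · ((1−A) + x² + y²), where p̂(x,y) := Σ_{|t|+|s|=1} e^{−i(tx+sy)} p(t,s) is the characteristic function of the one-step distribution. -/

import Mathlib

open MeasureTheory Filter Set

set_option maxHeartbeats 2000000 in
/-- Inequality (7.4) (`hatp`): for a nearest-neighbour random walk on `ℤ²` with one-step
probabilities `p(±1,0), p(0,±1)` and `q := min(p(0,1)+p(0,-1), p(1,0)+p(-1,0))`, for all
`(x,y) ∈ [-π,π]²` and `A ∈ [0,1)` one has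
`|1 - A p̂(x,y)| ≥ (1/24) q ((1-A) + x² + y²)`. -/
theorem char_fun_lower_bound (p10 pm10 p01 p0m1 : ℝ)
    (h10 : 0 ≤ p10) (hm10 : 0 ≤ pm10) (h01 : 0 ≤ p01) (h0m1 : 0 ≤ p0m1)
    (hsum : p10 + pm10 + p01 + p0m1 = 1)
    (x y : ℝ) (hx : x ∈ Set.Icc (-Real.pi) Real.pi) (hy : y ∈ Set.Icc (-Real.pi) Real.pi)
    (A : ℝ) (hA : A ∈ Set.Ico (0 : ℝ) 1) :
    (1 / 24) * min (p01 + p0m1) (p10 + pm10) * ((1 - A) + x ^ 2 + y ^ 2) ≤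
      ‖(1 - (A : ℂ) *
        ((p10 : ℂ) * Complex.exp (-Complex.I * (x : ℂ)) +
         (pm10 : ℂ) * Complex.exp (Complex.I * (x : ℂ)) +
         (p01 : ℂ) * Complex.exp (-Complex.I * (y : ℂ)) +
         (p0m1 : ℂ) * Complex.exp (Complex.I * (y : ℂ))))‖ := by
  obtain ⟨hA0, hA1⟩ := hA
  obtain ⟨hx1, hx2⟩ := hx
  obtain ⟨hy1, hy2⟩ := hy
  set z : ℂ := 1 - (A : ℂ) *
        ((p10 : ℂ) * Complex.exp (-Complex.I * (x : ℂ)) +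
         (pm10 : ℂ) * Complex.exp (Complex.I * (x : ℂ)) +
         (p01 : ℂ) * Complex.exp (-Complex.I * (y : ℂ)) +
         (p0m1 : ℂ) * Complex.exp (Complex.I * (y : ℂ))) with hz
  have key : ∀ t : ℝ, Complex.exp (Complex.I * (t : ℂ)) =
      Complex.ofReal (Real.cos t) + Complex.ofReal (Real.sin t) * Complex.I := by
    intro t
    rw [mul_comm, Complex.exp_mul_I, Complex.ofReal_cos, Complex.ofReal_sin]
  have hnegx : -Complex.I * (x : ℂ) = Complex.I * (((-x : ℝ)) : ℂ) := by push_cast; ring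
  have hnegy : -Complex.I * (y : ℂ) = Complex.I * (((-y : ℝ)) : ℂ) := by push_cast; ring
  have hre : z.re = 1 - A * ((p10 + pm10) * Real.cos x + (p01 + p0m1) * Real.cos y) := by
    rw [hz, hnegx, hnegy, key, key, key, key]
    simp [Complex.sub_re, Complex.mul_re, Complex.add_re, Complex.add_im, Complex.mul_im,
      Real.cos_neg, Real.sin_neg, Complex.cos_ofReal_re]
    exact Or.inl (by ring)
  have habs := Complex.re_le_norm z
  rw [hre] at habs
  refine le_trans ?_ habs
  clear habs hre key hnegx hnegy hz
  clear_value z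
  clear z
  -- now a real inequality
  set q := min (p01 + p0m1) (p10 + pm10) with hqdef
  have hq1 : q ≤ p01 + p0m1 := min_le_left _ _
  have hq2 : q ≤ p10 + pm10 := min_le_right _ _
  have hq0 : 0 ≤ q := le_min (by linarith) (by linarith)
  clear_value q
  clear hqdef
  have hqh : q ≤ 1 / 2 := by linarith
  have hpisq : Real.pi ^ 2 ≤ 10 := by
    nlinarith [Real.pi_lt_d2, Real.pi_pos]
  have hxb : x ^ 2 ≤ 10 := by nlinarith
  have hyb : y ^ 2 ≤ 10 := by nlinarith
  have hcx : Real.cos x ≤ 1 - 2 / Real.pi ^ 2 * x ^ 2 :=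
    Real.cos_le_one_sub_mul_cos_sq (abs_le.mpr ⟨hx1, hx2⟩)
  have hcy : Real.cos y ≤ 1 - 2 / Real.pi ^ 2 * y ^ 2 :=
    Real.cos_le_one_sub_mul_cos_sq (abs_le.mpr ⟨hy1, hy2⟩)
  have hpi2 : (0:ℝ) < Real.pi ^ 2 := by positivity
  have h5 : (1:ℝ)/5 ≤ 2 / Real.pi ^ 2 := by
    rw [div_le_div_iff₀ (by norm_num) hpi2]; linarith
  have hcx' : Real.cos x ≤ 1 - x ^ 2 / 5 := by
    nlinarith [mul_le_mul_of_nonneg_right h5 (sq_nonneg x)]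
  have hcy' : Real.cos y ≤ 1 - y ^ 2 / 5 := by
    nlinarith [mul_le_mul_of_nonneg_right h5 (sq_nonneg y)]
  have hcx1 : Real.cos x ≤ 1 := Real.cos_le_one x
  have hcy1 : Real.cos y ≤ 1 := Real.cos_le_one y
  clear hcx hcy h5 hpi2 hpisq hx1 hx2 hy1 hy2
  rcases le_total A (1/2) with hA2 | hA2
  · -- A small: 1 - A ≥ 1/2 dominates
    have e1 : A * (p10 + pm10) * Real.cos x ≤ A * (p10 + pm10) * 1 :=
      mul_le_mul_of_nonneg_left hcx1 (mul_nonneg hA0 (by linarith))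
    have e2 : A * (p01 + p0m1) * Real.cos y ≤ A * (p01 + p0m1) * 1 :=
      mul_le_mul_of_nonneg_left hcy1 (mul_nonneg hA0 (by linarith))
    have hAsum : A * (p10 + pm10) + A * (p01 + p0m1) = A := by linear_combination A * hsum
    have h1 : 1 - A ≤ 1 - A * ((p10 + pm10) * Real.cos x + (p01 + p0m1) * Real.cos y) := by
      nlinarith [e1, e2]
    have hS : (1 - A) + x ^ 2 + y ^ 2 ≤ 21 := by linarith
    have hS0 : (0:ℝ) ≤ (1 - A) + x ^ 2 + y ^ 2 := by nlinarith [sq_nonneg x, sq_nonneg y]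
    have := mul_le_mul hqh hS hS0 (by norm_num)
    nlinarith [this, h1]
  · -- A large: use the cosine bounds
    have e1 : A * ((p10 + pm10) * Real.cos x) ≤ A * ((p10 + pm10) * (1 - x ^ 2 / 5)) :=
      mul_le_mul_of_nonneg_left (mul_le_mul_of_nonneg_left hcx' (by linarith)) hA0
    have e2 : A * ((p01 + p0m1) * Real.cos y) ≤ A * ((p01 + p0m1) * (1 - y ^ 2 / 5)) :=
      mul_le_mul_of_nonneg_left (mul_le_mul_of_nonneg_left hcy' (by linarith)) hA0
    have hAsum : A * (p10 + pm10) + A * (p01 + p0m1) = A := by linear_combination A * hsum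
    have ha : 0 ≤ A * ((p10 + pm10 - q) * x ^ 2) :=
      mul_nonneg hA0 (mul_nonneg (by linarith) (sq_nonneg x))
    have hb : 0 ≤ A * ((p01 + p0m1 - q) * y ^ 2) :=
      mul_nonneg hA0 (mul_nonneg (by linarith) (sq_nonneg y))
    have hc : 0 ≤ (A - 1/2) * (q * x ^ 2) :=
      mul_nonneg (by linarith) (mul_nonneg hq0 (sq_nonneg x))
    have hd : 0 ≤ (A - 1/2) * (q * y ^ 2) :=
      mul_nonneg (by linarith) (mul_nonneg hq0 (sq_nonneg y))
    have keyineq : (1 - A) + (1/10) * q * (x ^ 2 + y ^ 2) ≤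
        1 - A * ((p10 + pm10) * Real.cos x + (p01 + p0m1) * Real.cos y) := by
      nlinarith [e1, e2, ha, hb, hc, hd]
    have hf1 : 0 ≤ (1 - q) * (1 - A) := mul_nonneg (by linarith) (by linarith)
    have hf2 : 0 ≤ q * (1 - A) := mul_nonneg hq0 (by linarith)
    have hf3 : 0 ≤ q * x ^ 2 := mul_nonneg hq0 (sq_nonneg x)
    have hf4 : 0 ≤ q * y ^ 2 := mul_nonneg hq0 (sq_nonneg y)
    nlinarith [keyineq, hf1, hf2, hf3, hf4]
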